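/- Let V be a real M×N matrix of full column rank N, G(w) := Vᵀ·diag(w)·V, E(w) := −(1/N)·log(det G(w)) + Σᵢ wᵢ, K := {u ∈ ℝ^M : Vᵀ·diag(u)·V = 0}, and let π_K denote the Euclidean orthogonal projection of ℝ^M onto the linear subspace K. For every η > 0, the regularized energy E_η(w) := E(w) + η·‖π_K w‖² has exactly one minimizer over the nonnegative orthant {w ∈ ℝ^M : wᵢ ≥ 0 for all i}. -/

import Mathlib

open Matrix

section A

variable {n : Type*} [Fintype n] [DecidableEq n]

lemma aux_posDef_of_psd_det_pos {A : Matrix n n ℝ} (hA : A.PosSemidef) (hdet : 0 < A.det) :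
    A.PosDef := by
  refine .of_dotProduct_mulVec_pos hA.isHermitian (fun x hx => ?_)
  rcases lt_or_eq_of_le (hA.dotProduct_mulVec_nonneg x) with h | h
  · simpa using h
  · exfalso
    have h0 : A *ᵥ x = 0 := (hA.dotProduct_mulVec_zero_iff x).mp h.symm
    have hinj : Function.Injective (A.mulVec) :=
      Matrix.mulVec_injective_iff_isUnit.mpr ((Matrix.isUnit_iff_isUnit_det _).mpr hdet.ne'.isUnit)
    exact hx (hinj (by simpa using h0))


lemma aux_psd_det_nonneg' {A : Matrix n n ℝ} (hA : A.PosSemidef) : 0 ≤ A.det := by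
  have := hA.isHermitian.det_eq_prod_eigenvalues
  rw [this]
  exact Finset.prod_nonneg fun i _ => by simpa using hA.eigenvalues_nonneg i

variable {n : Type*} [Fintype n] [DecidableEq n]

lemma aux_one_conv {S : Matrix n n ℝ} (hS : S.PosDef) {a b : ℝ} (ha : 0 < a) (hb : 0 < b)
    (hab : a + b = 1) (hS1 : S ≠ 1) :
    b * Real.log S.det < Real.log (a • (1 : Matrix n n ℝ) + b • S).det := by
  have h := hS.isHermitian
  set μ := h.eigenvalues with hμ
  have hμpos : ∀ i, 0 < μ i := fun i => hS.eigenvalues_pos i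
  set U := (h.eigenvectorUnitary : Matrix n n ℝ) with hU
  have hUU : U * star U = 1 := Matrix.mem_unitaryGroup_iff.mp h.eigenvectorUnitary.2
  have hspec : S = U * diagonal μ * star U := by
    have := h.spectral_theorem
    simpa using this
  have hdiag : diagonal (fun i => a + b * μ i) = a • (1 : Matrix n n ℝ) + b • diagonal μ := by
    have : (fun i => a + b * μ i) = (fun i => a • (1:ℝ) + b • μ i) := by
      funext i; simp
    rw [this, ← diagonal_one, ← diagonal_smul, ← diagonal_smul, ← diagonal_add]
    rfl
  have hkey : a • (1 : Matrix n n ℝ) + b • S = U * diagonal (fun i => a + b * μ i) * star U := by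
    calc a • (1 : Matrix n n ℝ) + b • S
        = a • (U * 1 * star U) + b • (U * diagonal μ * star U) := by rw [mul_one, hUU, ← hspec]
      _ = U * (a • (1:Matrix n n ℝ)) * star U + U * (b • diagonal μ) * star U := by
          rw [Matrix.mul_smul, Matrix.smul_mul, Matrix.mul_smul, Matrix.smul_mul]
      _ = U * (a • (1:Matrix n n ℝ) + b • diagonal μ) * star U := by
          rw [← Matrix.add_mul, ← Matrix.mul_add]
      _ = U * diagonal (fun i => a + b * μ i) * star U := by rw [← hdiag]
  have hdetconj : ∀ (D : Matrix n n ℝ), (U * D * star U).det = D.det := by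
    intro D
    rw [det_mul, det_mul]
    have : U.det * (star U).det = 1 := by rw [← det_mul, hUU, det_one]
    calc U.det * D.det * (star U).det = D.det * (U.det * (star U).det) := by ring
    _ = D.det := by rw [this, mul_one]
  have hdet1 : (a • (1:Matrix n n ℝ) + b • S).det = ∏ i, (a + b * μ i) := by
    rw [hkey, hdetconj, det_diagonal]
  have hdetS : S.det = ∏ i, μ i := by
    rw [hspec, hdetconj, det_diagonal]
  -- exists eigenvalue ≠ 1
  have hex : ∃ i, μ i ≠ 1 := by
    by_contra hc
    push_neg at hc
    apply hS1
    rw [hspec]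
    have : diagonal μ = 1 := by
      have hμ1 : μ = fun _ => 1 := funext hc
      rw [hμ1, ← diagonal_one]
    rw [this, mul_one, hUU]
  rw [hdet1, hdetS, Real.log_prod (fun i _ => (hμpos i).ne'),
    Real.log_prod (fun i _ => by have := hμpos i; nlinarith), Finset.mul_sum]
  obtain ⟨i₀, hi₀⟩ := hex
  apply Finset.sum_lt_sum
  · intro i _
    have := strictConcaveOn_log_Ioi.concaveOn.2 (Set.mem_Ioi.mpr one_pos)
      (Set.mem_Ioi.mpr (hμpos i)) ha.le hb.le hab
    simpa [Real.log_one, smul_eq_mul] using this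
  · refine ⟨i₀, Finset.mem_univ _, ?_⟩
    have := strictConcaveOn_log_Ioi.2 (Set.mem_Ioi.mpr one_pos)
      (Set.mem_Ioi.mpr (hμpos i₀)) (Ne.symm hi₀) ha hb hab
    simpa [Real.log_one, smul_eq_mul] using this

lemma aux_normsq {E : Type*} [NormedAddCommGroup E] [InnerProductSpace ℝ E]
    (p q : E) {a b : ℝ} (hab : a + b = 1) :
    ‖a • p + b • q‖ ^ 2 = a * ‖p‖ ^ 2 + b * ‖q‖ ^ 2 - a * b * ‖p - q‖ ^ 2 := by
  have h1 : ∀ x : E, ‖x‖ ^ 2 = inner ℝ x x := fun x => (real_inner_self_eq_norm_sq x).symm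
  rw [h1, h1, h1, h1]
  simp only [inner_add_add_self, inner_sub_sub_self, real_inner_smul_left, real_inner_smul_right]
  linear_combination (a * (inner ℝ p p : ℝ) + b * (inner ℝ q q : ℝ)) * hab

lemma aux_psd_smul {n : Type*} [Fintype n] {A : Matrix n n ℝ} (hA : A.PosSemidef) {c : ℝ}
    (hc : 0 ≤ c) : (c • A).PosSemidef := by
  refine .of_dotProduct_mulVec_nonneg ?_ fun x => ?_
  · rw [Matrix.IsHermitian, conjTranspose_smul, hA.isHermitian]
    norm_num
  · rw [smul_mulVec, dotProduct_smul]
    exact smul_nonneg hc (hA.dotProduct_mulVec_nonneg x)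

noncomputable def Dm {M N : ℕ} (V : Matrix (Fin M) (Fin N) ℝ) (v : Fin M → ℝ) :
    Matrix (Fin N) (Fin N) ℝ := Vᵀ * diagonal v * V

variable {M N : ℕ} (V : Matrix (Fin M) (Fin N) ℝ)

lemma Dm_add (v u : Fin M → ℝ) : Dm V (v + u) = Dm V v + Dm V u := by
  unfold Dm
  have h : diagonal (v + u) = diagonal v + diagonal u := by
    ext i j
    by_cases hij : i = j <;> simp [diagonal_apply, hij]
  rw [h, Matrix.mul_add, Matrix.add_mul]

lemma Dm_smul (a : ℝ) (v : Fin M → ℝ) : Dm V (a • v) = a • Dm V v := by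
  simp [Dm, diagonal_smul, Matrix.mul_smul, Matrix.smul_mul]

lemma Dm_sub (v u : Fin M → ℝ) : Dm V (v - u) = Dm V v - Dm V u := by
  have h : v - u = v + (-1 : ℝ) • u := by funext i; simp; ring
  rw [h, Dm_add, Dm_smul]; module

lemma coe_comb (x y : EuclideanSpace ℝ (Fin M)) (a b : ℝ) :
    (fun i => (a • x + b • y) i) = a • (fun i => x i) + b • (fun i => y i) := by
  funext i; simp

lemma coe_sub (x y : EuclideanSpace ℝ (Fin M)) :
    (fun i => (x - y) i) = (fun i => x i) - (fun i => y i) := by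
  funext i; simp

lemma Dm_psd {w : Fin M → ℝ} (hw : ∀ i, 0 ≤ w i) : (Dm V w).PosSemidef := by
  have hd : Matrix.PosSemidef (diagonal w) := Matrix.PosSemidef.diagonal (fun i => hw i)
  have := hd.conjTranspose_mul_mul_same V
  rwa [conjTranspose_eq_transpose_of_trivial] at this

lemma sum_comb (x y : EuclideanSpace ℝ (Fin M)) (a b : ℝ) :
    ∑ i, (a • x + b • y) i = a * ∑ i, x i + b * ∑ i, y i := by
  simp [Finset.sum_add_distrib, Finset.mul_sum]

variable {M N : ℕ} (V : Matrix (Fin M) (Fin N) ℝ)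

lemma aux_mulVec_inj (hV : V.rank = N) : Function.Injective V.mulVecLin := by
  rw [← LinearMap.ker_eq_bot]
  have h1 : Module.finrank ℝ (LinearMap.ker V.mulVecLin)
      + Module.finrank ℝ (LinearMap.range V.mulVecLin) = N := by
    have := LinearMap.finrank_range_add_finrank_ker V.mulVecLin
    simp only [Module.finrank_pi, Fintype.card_fin] at this
    omega
  have h2 : Module.finrank ℝ (LinearMap.range V.mulVecLin) = N := hV
  have h3 : Module.finrank ℝ (LinearMap.ker V.mulVecLin) = 0 := by omega
  exact Submodule.finrank_eq_zero.mp h3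

lemma aux_VtV_pd (hV : V.rank = N) : (Vᵀ * V).PosDef := by
  refine .of_dotProduct_mulVec_pos ?_ fun x hx => ?_
  · rw [Matrix.IsHermitian, conjTranspose_eq_transpose_of_trivial, transpose_mul,
      transpose_transpose]
  · have hVx : V *ᵥ x ≠ 0 := by
      intro hc
      exact hx (aux_mulVec_inj V hV (by simpa [Matrix.mulVecLin] using hc))
    have : star x ⬝ᵥ (Vᵀ * V) *ᵥ x = (V *ᵥ x) ⬝ᵥ (V *ᵥ x) := by
      simp only [star_trivial]
      rw [← Matrix.mulVec_mulVec, dotProduct_mulVec, vecMul_transpose]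
    rw [this]
    have := dotProduct_star_self_pos_iff (R := ℝ) (v := V *ᵥ x)
    simp only [star_trivial] at this
    exact this.mpr hVx
lemma aux_pd_smul {A : Matrix n n ℝ} (hA : A.PosDef) {c : ℝ} (hc : 0 < c) : (c • A).PosDef := by
  refine .of_dotProduct_mulVec_pos ?_ fun x hx => ?_
  · rw [Matrix.IsHermitian, conjTranspose_smul, hA.isHermitian]
    norm_num
  · rw [smul_mulVec, dotProduct_smul]
    exact smul_pos hc (hA.dotProduct_mulVec_pos hx)

open scoped MatrixOrder in
lemma aux_logdet_strict {A B : Matrix n n ℝ} (hA : A.PosDef) (hB : B.PosDef) {a b : ℝ}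
    (ha : 0 < a) (hb : 0 < b) (hab : a + b = 1) (hAB : A ≠ B) :
    a * Real.log A.det + b * Real.log B.det < Real.log (a • A + b • B).det := by
  set C := CFC.sqrt A with hCdef
  have hCpsd : C.PosSemidef := Matrix.nonneg_iff_posSemidef.mp (CFC.sqrt_nonneg A)
  have hCC : C * C = A := CFC.sqrt_mul_sqrt_self A (Matrix.nonneg_iff_posSemidef.mpr hA.posSemidef)
  have hdetA : C.det * C.det = A.det := by rw [← det_mul, hCC]
  have hdetCpos : 0 < C.det := by
    rcases (aux_psd_det_nonneg' hCpsd).lt_or_eq with h | h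
    · exact h
    · exfalso; have := hA.det_pos; rw [← hdetA, ← h, mul_zero] at this; exact lt_irrefl _ this
  have hCpd : C.PosDef := aux_posDef_of_psd_det_pos hCpsd hdetCpos
  have hCunit : IsUnit C.det := hdetCpos.ne'.isUnit
  have hCinv : C * C⁻¹ = 1 := mul_nonsing_inv C hCunit
  have hCinv' : C⁻¹ * C = 1 := nonsing_inv_mul C hCunit
  have hCipd : C⁻¹.PosDef := hCpd.inv
  have hsym : C⁻¹ᵀ = C⁻¹ := by
    rw [← conjTranspose_eq_transpose_of_trivial]; exact hCipd.isHermitian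
  set T := C⁻¹ * B * C⁻¹ with hTdef
  have hCTC : C * T * C = B := by
    rw [hTdef]
    simp only [← mul_assoc]
    rw [hCinv, one_mul, mul_assoc, hCinv', mul_one]
  have hTpd : T.PosDef := by
    refine .of_dotProduct_mulVec_pos ?_ fun x hx => ?_
    · have h1 : Tᴴ = C⁻¹ᴴ * Bᴴ * C⁻¹ᴴ := by
        rw [hTdef, conjTranspose_mul, conjTranspose_mul, mul_assoc]
      rw [Matrix.IsHermitian] at *
      rw [h1, hCipd.isHermitian, hB.isHermitian]
    · have hxC : C⁻¹ *ᵥ x ≠ 0 := by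
        intro hc
        apply hx
        have h2 : C *ᵥ (C⁻¹ *ᵥ x) = C *ᵥ 0 := by rw [hc]
        rwa [mulVec_mulVec, hCinv, one_mulVec, mulVec_zero] at h2
      have hpos := hB.dotProduct_mulVec_pos hxC
      have hrw : star x ⬝ᵥ T *ᵥ x = star (C⁻¹ *ᵥ x) ⬝ᵥ B *ᵥ (C⁻¹ *ᵥ x) := by
        simp only [star_trivial]
        rw [hTdef, ← Matrix.mulVec_mulVec, ← Matrix.mulVec_mulVec, dotProduct_mulVec, ← hsym,
          vecMul_transpose]
        rw [hsym]
      rw [hrw]; exact hpos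
  have hcomb : a • A + b • B = C * (a • (1 : Matrix n n ℝ) + b • T) * C := by
    rw [Matrix.mul_add, Matrix.add_mul, Matrix.mul_smul, Matrix.smul_mul, mul_one, hCC,
      Matrix.mul_smul, Matrix.smul_mul, hCTC]
  have hT1 : T ≠ 1 := by
    intro hc
    apply hAB
    rw [← hCC, ← hCTC, hc, mul_one]
  have hmidpd : (a • (1 : Matrix n n ℝ) + b • T).PosDef :=
    (aux_pd_smul Matrix.PosDef.one ha).add (aux_pd_smul hTpd hb)
  have hdetcomb : (a • A + b • B).det = A.det * (a • (1 : Matrix n n ℝ) + b • T).det := by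
    rw [hcomb, det_mul, det_mul]
    ring_nf
    rw [pow_two, hdetA]
    ring
  have hdetT : T.det = B.det / A.det := by
    rw [hTdef, det_mul, det_mul, det_nonsing_inv, Ring.inverse_eq_inv',
      eq_div_iff hA.det_pos.ne', ← hdetA]
    field_simp
  have hmain := aux_one_conv hTpd ha hb hab hT1
  rw [hdetcomb, Real.log_mul hA.det_pos.ne' hmidpd.det_pos.ne']
  have hlogT : Real.log T.det = Real.log B.det - Real.log A.det := by
    rw [hdetT, Real.log_div hB.det_pos.ne' hA.det_pos.ne']
  rw [hlogT] at hmain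
  calc a * Real.log A.det + b * Real.log B.det
      = Real.log A.det + b * (Real.log B.det - Real.log A.det) := by
        linear_combination (Real.log A.det) * hab
    _ < Real.log A.det + Real.log (a • (1 : Matrix n n ℝ) + b • T).det := by linarith
end A
section B
variable {M N : ℕ}

lemma aux_strictconv (V : Matrix (Fin M) (Fin N) ℝ) (hN : 0 < N)
    (K : Submodule ℝ (EuclideanSpace ℝ (Fin M)))
    (hK : ∀ u : EuclideanSpace ℝ (Fin M), u ∈ K ↔ Dm V (fun i => u i) = 0)
    {η : ℝ} (hη : 0 < η) :
    StrictConvexOn ℝ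
      {w : EuclideanSpace ℝ (Fin M) | (∀ i, 0 ≤ w i) ∧ 0 < (Dm V (fun i => w i)).det}
      (fun w => -(1 / (N : ℝ)) * Real.log (Dm V (fun i => w i)).det + ∑ i, w i
        + η * ‖(K.orthogonalProjectionOnto w : EuclideanSpace ℝ (Fin M))‖ ^ 2) := by
  have hNR : (0 : ℝ) < 1 / (N : ℝ) := by positivity
  constructor
  · -- convexity of the set
    intro x hx y hy a b ha hb hab
    obtain ⟨hx1, hx2⟩ := hx
    obtain ⟨hy1, hy2⟩ := hy
    have hxpd : (Dm V (fun i => x i)).PosDef := aux_posDef_of_psd_det_pos (Dm_psd V hx1) hx2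
    have hypd : (Dm V (fun i => y i)).PosDef := aux_posDef_of_psd_det_pos (Dm_psd V hy1) hy2
    have hcomb : Dm V (fun i => (a • x + b • y) i)
        = a • Dm V (fun i => x i) + b • Dm V (fun i => y i) := by
      rw [coe_comb, Dm_add, Dm_smul, Dm_smul]
    constructor
    · intro i
      simp only [PiLp.add_apply, PiLp.smul_apply, smul_eq_mul]
      have := hx1 i; have := hy1 i
      positivity
    · rw [hcomb]
      have hpd : (a • Dm V (fun i => x i) + b • Dm V (fun i => y i)).PosDef := by
        rcases eq_or_lt_of_le ha with ha' | ha'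
        · have hb1 : b = 1 := by linarith
          rw [← ha', hb1]
          simpa using hypd
        · exact (aux_pd_smul hxpd ha').add_posSemidef (aux_psd_smul hypd.posSemidef hb)
      exact hpd.det_pos
  · -- strict convexity
    intro x hx y hy hxy a b ha hb hab
    obtain ⟨hx1, hx2⟩ := hx
    obtain ⟨hy1, hy2⟩ := hy
    have hxpd : (Dm V (fun i => x i)).PosDef := aux_posDef_of_psd_det_pos (Dm_psd V hx1) hx2
    have hypd : (Dm V (fun i => y i)).PosDef := aux_posDef_of_psd_det_pos (Dm_psd V hy1) hy2
    have hcomb : Dm V (fun i => (a • x + b • y) i)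
        = a • Dm V (fun i => x i) + b • Dm V (fun i => y i) := by
      rw [coe_comb, Dm_add, Dm_smul, Dm_smul]
    have hsum := sum_comb x y a b
    set px : EuclideanSpace ℝ (Fin M) := (K.orthogonalProjectionOnto x : EuclideanSpace ℝ (Fin M))
      with hpx
    set py : EuclideanSpace ℝ (Fin M) := (K.orthogonalProjectionOnto y : EuclideanSpace ℝ (Fin M))
      with hpy
    have hproj : (K.orthogonalProjectionOnto (a • x + b • y) : EuclideanSpace ℝ (Fin M))
        = a • px + b • py := by
      rw [map_add, _root_.map_smul, _root_.map_smul]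
      simp [Submodule.coe_add, Submodule.coe_smul]
      rfl
    have hnormsq : ‖(K.orthogonalProjectionOnto (a • x + b • y) : EuclideanSpace ℝ (Fin M))‖ ^ 2
        = a * ‖px‖ ^ 2 + b * ‖py‖ ^ 2 - a * b * ‖px - py‖ ^ 2 := by
      rw [hproj, aux_normsq px py hab]
    simp only [smul_eq_mul]
    rw [hsum, hnormsq]
    by_cases hmem : x - y ∈ K
    · -- G equal, projection strict
      have hDeq : Dm V (fun i => x i) = Dm V (fun i => y i) := by
        have h0 := (hK (x - y)).mp hmem
        rw [coe_sub, Dm_sub, sub_eq_zero] at h0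
        exact h0
      have hpxy : px - py = x - y := by
        rw [hpx, hpy, ← Submodule.coe_sub, ← map_sub]
        exact Submodule.starProjection_eq_self_iff.mpr hmem
      have hne : px - py ≠ 0 := by rw [hpxy]; exact sub_ne_zero.mpr hxy
      have hd : 0 < ‖px - py‖ ^ 2 := pow_pos (by rwa [norm_pos_iff]) 2
      have hDcomb : Dm V (fun i => (a • x + b • y) i) = Dm V (fun i => x i) := by
        rw [hcomb, hDeq, ← add_smul, hab, one_smul]
      rw [hDcomb, ← hDeq]
      have hL : a * (-(1 / (N:ℝ)) * Real.log (Dm V (fun i => x i)).det)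
          + b * (-(1 / (N:ℝ)) * Real.log (Dm V (fun i => x i)).det)
          = -(1 / (N:ℝ)) * Real.log (Dm V (fun i => x i)).det := by
        linear_combination (-(1 / (N:ℝ)) * Real.log (Dm V (fun i => x i)).det) * hab
      have hq : 0 < η * (a * b * ‖px - py‖ ^ 2) := mul_pos hη (mul_pos (mul_pos ha hb) hd)
      linarith [hL, hq]
    · -- G strict
      have hDne : Dm V (fun i => x i) ≠ Dm V (fun i => y i) := by
        intro hc
        apply hmem
        rw [hK (x - y), coe_sub, Dm_sub, hc, sub_self]
      have hlog := aux_logdet_strict hxpd hypd ha hb hab hDne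
      rw [hcomb]
      have hF : -(1 / (N : ℝ)) * Real.log (a • Dm V (fun i => x i) + b • Dm V (fun i => y i)).det
          < -(1 / (N : ℝ)) * (a * Real.log (Dm V (fun i => x i)).det
            + b * Real.log (Dm V (fun i => y i)).det) := by
        have := mul_lt_mul_of_pos_left hlog hNR
        linarith
      have hd : 0 ≤ ‖px - py‖ ^ 2 := by positivity
      have hE : -(1 / (N:ℝ)) * (a * Real.log (Dm V (fun i => x i)).det
          + b * Real.log (Dm V (fun i => y i)).det)
          = a * (-(1 / (N:ℝ)) * Real.log (Dm V (fun i => x i)).det)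
          + b * (-(1 / (N:ℝ)) * Real.log (Dm V (fun i => y i)).det) := by ring
      have hq : 0 ≤ η * (a * b * ‖px - py‖ ^ 2) :=
        mul_nonneg hη.le (mul_nonneg (mul_nonneg ha.le hb.le) hd)
      linarith [hF, hE, hq]
end B
section C
variable {M N : ℕ}

lemma aux_norm_le_sum (w : EuclideanSpace ℝ (Fin M)) (hw : ∀ i, 0 ≤ w i) :
    ‖w‖ ≤ ∑ i, w i := by
  rw [EuclideanSpace.norm_eq]
  have h1 : ∀ i, ‖w i‖ = w i := fun i => Real.norm_of_nonneg (hw i)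
  calc Real.sqrt (∑ i, ‖w i‖ ^ 2) = Real.sqrt (∑ i, (w i) ^ 2) := by simp_rw [h1]
    _ ≤ Real.sqrt ((∑ i, w i) ^ 2) :=
        Real.sqrt_le_sqrt (Finset.sum_sq_le_sq_sum_of_nonneg fun i _ => hw i)
    _ = ∑ i, w i := Real.sqrt_sq (Finset.sum_nonneg fun i _ => hw i)

lemma aux_linlog {s : ℝ} (hs : 0 ≤ s) : Real.log (1 + s) ≤ s / 2 + 1 := by
  have h2 : Real.log ((1 + s) / 2) ≤ (1 + s) / 2 - 1 :=
    Real.log_le_sub_one_of_pos (by linarith)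
  have h3 : Real.log (1 + s) = Real.log 2 + Real.log ((1 + s) / 2) := by
    rw [← Real.log_mul (by norm_num) (by positivity)]
    ring_nf
  have h4 : Real.log 2 ≤ 1 := by
    have := Real.log_le_sub_one_of_pos (by norm_num : (0:ℝ) < 2)
    linarith
  linarith

lemma aux_det_ub (V : Matrix (Fin M) (Fin N) ℝ) {bV : ℝ} (hb1 : 1 ≤ bV)
    (hb : ∀ k l, |V k l| ≤ bV) (w : Fin M → ℝ) (hw : ∀ i, 0 ≤ w i) :
    (Dm V w).det ≤ (N.factorial : ℝ) * (bV ^ 2 * (1 + ∑ i, w i)) ^ N := by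
  have hbV0 : 0 ≤ bV := le_trans zero_le_one hb1
  have hs0 : 0 ≤ ∑ i, w i := Finset.sum_nonneg fun i _ => hw i
  have hentry : ∀ i j, |(Dm V w) i j| ≤ bV ^ 2 * (1 + ∑ k, w k) := by
    intro i j
    have hDij : Dm V w i j = ∑ k, V k i * w k * V k j := by
      unfold Dm
      rw [Matrix.mul_apply]
      simp_rw [Matrix.mul_diagonal, transpose_apply]
    rw [hDij]
    calc |∑ k, V k i * w k * V k j| ≤ ∑ k, |V k i * w k * V k j| :=
          Finset.abs_sum_le_sum_abs _ _
      _ ≤ ∑ k, bV ^ 2 * w k := by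
          apply Finset.sum_le_sum
          intro k _
          rw [abs_mul, abs_mul, abs_of_nonneg (hw k)]
          have h1 := hb k i
          have h2 := hb k j
          have h3 := abs_nonneg (V k i)
          have h4 := abs_nonneg (V k j)
          have h5 := hw k
          have hbV0' : (0:ℝ) ≤ bV := hbV0
          have h6 : |V k i| * |V k j| ≤ bV * bV := mul_le_mul h1 h2 h4 hbV0'
          nlinarith [mul_le_mul_of_nonneg_right h6 h5]
      _ = bV ^ 2 * ∑ k, w k := by rw [← Finset.mul_sum]
      _ ≤ bV ^ 2 * (1 + ∑ k, w k) := by nlinarith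
  have hdet := Matrix.det_le (A := Dm V w) (abv := AbsoluteValue.abs)
    (x := bV ^ 2 * (1 + ∑ k, w k)) (fun i j => hentry i j)
  simp only [Fintype.card_fin, nsmul_eq_mul] at hdet
  calc (Dm V w).det ≤ |(Dm V w).det| := le_abs_self _
    _ ≤ (N.factorial : ℝ) * (bV ^ 2 * (1 + ∑ i, w i)) ^ N := hdet

lemma aux_exists (V : Matrix (Fin M) (Fin N) ℝ) (hN : 0 < N) (hV : V.rank = N)
    (K : Submodule ℝ (EuclideanSpace ℝ (Fin M))) {η : ℝ} (hη : 0 < η) :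
    ∃ w ∈ {w : EuclideanSpace ℝ (Fin M) | (∀ i, 0 ≤ w i) ∧ 0 < (Dm V (fun i => w i)).det},
      IsMinOn (fun w : EuclideanSpace ℝ (Fin M) =>
          -(1 / (N : ℝ)) * Real.log (Dm V (fun i => w i)).det + ∑ i, w i
            + η * ‖(K.orthogonalProjectionOnto w : EuclideanSpace ℝ (Fin M))‖ ^ 2)
        {w : EuclideanSpace ℝ (Fin M) | (∀ i, 0 ≤ w i) ∧ 0 < (Dm V (fun i => w i)).det} w := by
  classical
  set f : EuclideanSpace ℝ (Fin M) → ℝ := fun w =>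
    -(1 / (N : ℝ)) * Real.log (Dm V (fun i => w i)).det + ∑ i, w i
      + η * ‖(K.orthogonalProjectionOnto w : EuclideanSpace ℝ (Fin M))‖ ^ 2 with hf
  set S : Set (EuclideanSpace ℝ (Fin M)) :=
    {w | (∀ i, 0 ≤ w i) ∧ 0 < (Dm V (fun i => w i)).det} with hSdef
  have hNR : (0 : ℝ) < (N : ℝ) := by exact_mod_cast hN
  -- the all-ones vector
  set w₁ : EuclideanSpace ℝ (Fin M) := WithLp.toLp 2 (fun _ => (1 : ℝ)) with hw₁
  have hDw₁ : Dm V (fun i => w₁ i) = Vᵀ * V := by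
    show Vᵀ * diagonal (fun _ => (1:ℝ)) * V = Vᵀ * V
    have h0 : diagonal (fun _ : Fin M => (1:ℝ)) = (1 : Matrix (Fin M) (Fin M) ℝ) := by
      rw [show (fun _ : Fin M => (1:ℝ)) = (1 : Fin M → ℝ) from rfl]
      exact diagonal_one
    rw [h0, Matrix.mul_one]
  have hw₁S : w₁ ∈ S := by
    refine ⟨fun i => zero_le_one, ?_⟩
    rw [hDw₁]
    exact (aux_VtV_pd V hV).det_pos
  set c : ℝ := f w₁ with hc
  -- lower bounds for f on S
  set bV : ℝ := 1 + ∑ k, ∑ l, |V k l| with hbV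
  have hb1 : 1 ≤ bV := by
    rw [hbV]
    have : 0 ≤ ∑ k, ∑ l, |V k l| :=
      Finset.sum_nonneg fun k _ => Finset.sum_nonneg fun l _ => abs_nonneg _
    linarith
  have hb : ∀ k l, |V k l| ≤ bV := by
    intro k l
    rw [hbV]
    have h1 : |V k l| ≤ ∑ l', |V k l'| :=
      Finset.single_le_sum (f := fun l' => |V k l'|) (fun l' _ => abs_nonneg _)
        (Finset.mem_univ l)
    have h2 : ∑ l', |V k l'| ≤ ∑ k', ∑ l', |V k' l'| :=
      Finset.single_le_sum (f := fun k' => ∑ l', |V k' l'|)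
        (fun k' _ => Finset.sum_nonneg fun l' _ => abs_nonneg _) (Finset.mem_univ k)
    linarith
  have hbV0 : (0:ℝ) < bV := lt_of_lt_of_le zero_lt_one hb1
  set c₀ : ℝ := (1 / (N : ℝ)) * Real.log ((N.factorial : ℝ) * (bV ^ 2) ^ N) with hc₀
  have hflb : ∀ w ∈ S, (∑ i, w i) - Real.log (1 + ∑ i, w i) - c₀ ≤ f w := by
    intro w hw
    obtain ⟨hw1, hw2⟩ := hw
    set s := ∑ i, w i with hs
    have hs0 : 0 ≤ s := Finset.sum_nonneg fun i _ => hw1 i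
    have hub := aux_det_ub V hb1 hb (fun i => w i) hw1
    have hlog : Real.log (Dm V (fun i => w i)).det
        ≤ Real.log ((N.factorial : ℝ) * (bV ^ 2) ^ N) + (N : ℝ) * Real.log (1 + s) := by
      have h1 : Real.log (Dm V (fun i => w i)).det
          ≤ Real.log ((N.factorial : ℝ) * (bV ^ 2 * (1 + s)) ^ N) :=
        Real.log_le_log hw2 hub
      have h2 : ((N.factorial : ℝ) * (bV ^ 2 * (1 + s)) ^ N)
          = ((N.factorial : ℝ) * (bV ^ 2) ^ N) * (1 + s) ^ N := by
        rw [mul_pow]; ring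
      rw [h2] at h1
      have hNf : (0:ℝ) < (N.factorial : ℝ) * (bV ^ 2) ^ N := by positivity
      rw [Real.log_mul hNf.ne' (by positivity), Real.log_pow] at h1
      linarith
    have hq : 0 ≤ η * ‖(K.orthogonalProjectionOnto w : EuclideanSpace ℝ (Fin M))‖ ^ 2 := by
      positivity
    have h3 : -(1 / (N : ℝ)) * Real.log (Dm V (fun i => w i)).det
        ≥ -c₀ - Real.log (1 + s) := by
      rw [hc₀]
      have := mul_le_mul_of_nonneg_left hlog (le_of_lt (by positivity : (0:ℝ) < 1 / (N:ℝ)))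
      have hNN : (1 / (N:ℝ)) * ((N:ℝ) * Real.log (1 + s)) = Real.log (1 + s) := by
        field_simp
      nlinarith [this]
    show -(1 / (N : ℝ)) * Real.log (Dm V (fun i => w i)).det + s
        + η * ‖(K.orthogonalProjectionOnto w : EuclideanSpace ℝ (Fin M))‖ ^ 2
        ≥ s - Real.log (1 + s) - c₀
    linarith
  -- bound on the sum in the sublevel set
  set R : ℝ := 2 * (c + c₀ + 2) with hR
  have hsum_bound : ∀ w ∈ S, f w ≤ c → ∑ i, w i ≤ R := by
    intro w hw hfw
    have hs0 : 0 ≤ ∑ i, w i := Finset.sum_nonneg fun i _ => hw.1 i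
    have h1 := hflb w hw
    have h2 := aux_linlog hs0
    rw [hR]
    linarith
  -- det lower bound in the sublevel set
  set δ : ℝ := Real.exp (-(N : ℝ) * c) with hδ
  have hδ0 : 0 < δ := Real.exp_pos _
  have hdelta : ∀ w ∈ S, f w ≤ c → δ ≤ (Dm V (fun i => w i)).det := by
    intro w hw hfw
    obtain ⟨hw1, hw2⟩ := hw
    have hs0 : 0 ≤ ∑ i, w i := Finset.sum_nonneg fun i _ => hw1 i
    have hq : 0 ≤ η * ‖(K.orthogonalProjectionOnto w : EuclideanSpace ℝ (Fin M))‖ ^ 2 := by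
      positivity
    have h1 : -(1 / (N : ℝ)) * Real.log (Dm V (fun i => w i)).det ≤ c := by
      have : f w = -(1 / (N : ℝ)) * Real.log (Dm V (fun i => w i)).det + ∑ i, w i
          + η * ‖(K.orthogonalProjectionOnto w : EuclideanSpace ℝ (Fin M))‖ ^ 2 := rfl
      linarith [hfw, this ▸ hfw]
    have h2 : -c ≤ (1 / (N : ℝ)) * Real.log (Dm V (fun i => w i)).det := by linarith
    have h3 := mul_le_mul_of_nonneg_left h2 hNR.le
    have h4 : (N:ℝ) * ((1 / (N : ℝ)) * Real.log (Dm V (fun i => w i)).det)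
        = Real.log (Dm V (fun i => w i)).det := by field_simp
    rw [h4] at h3
    have h5 : δ ≤ Real.exp (Real.log (Dm V (fun i => w i)).det) := by
      rw [hδ]
      apply Real.exp_le_exp.mpr
      linarith
    rwa [Real.exp_log hw2] at h5
  -- the compact sublevel set
  set T : Set (EuclideanSpace ℝ (Fin M)) :=
    {w | (∀ i, 0 ≤ w i) ∧ δ ≤ (Dm V (fun i => w i)).det ∧ f w ≤ c} with hT
  have hTS : T ⊆ S := fun w hw => ⟨hw.1, lt_of_lt_of_le hδ0 hw.2.1⟩
  have hST : ∀ w ∈ S, f w ≤ c → w ∈ T := fun w hw hfw =>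
    ⟨hw.1, hdelta w hw hfw, hfw⟩
  have hw₁T : w₁ ∈ T := hST w₁ hw₁S le_rfl
  -- continuity
  have hcoe : Continuous (fun w : EuclideanSpace ℝ (Fin M) => (fun i => w i : Fin M → ℝ)) :=
    PiLp.continuous_ofLp (p := 2) (β := fun _ : Fin M => ℝ)
  have hcontdet : Continuous (fun w : EuclideanSpace ℝ (Fin M) => (Dm V (fun i => w i)).det) := by
    apply Continuous.matrix_det
    exact (continuous_const.matrix_mul (hcoe.matrix_diagonal)).matrix_mul continuous_const
  have hcontsum : Continuous (fun w : EuclideanSpace ℝ (Fin M) => ∑ i, w i) := by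
    apply continuous_finset_sum
    intro i _
    exact (continuous_apply i).comp hcoe
  have hcontq : Continuous (fun w : EuclideanSpace ℝ (Fin M) =>
      η * ‖(K.orthogonalProjectionOnto w : EuclideanSpace ℝ (Fin M))‖ ^ 2) := by
    apply continuous_const.mul
    exact ((continuous_subtype_val.comp (K.orthogonalProjectionOnto).continuous).norm.pow 2)
  set A : Set (EuclideanSpace ℝ (Fin M)) :=
    {w | ∀ i, 0 ≤ w i} ∩ {w | δ ≤ (Dm V (fun i => w i)).det} with hA
  have hAclosed : IsClosed A := by
    apply IsClosed.inter
    · have : {w : EuclideanSpace ℝ (Fin M) | ∀ i, 0 ≤ w i}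
          = ⋂ i, {w : EuclideanSpace ℝ (Fin M) | 0 ≤ w i} := by
        ext w; simp [Set.mem_iInter]
      rw [this]
      exact isClosed_iInter fun i =>
        isClosed_le continuous_const ((continuous_apply i).comp hcoe)
    · exact isClosed_le continuous_const hcontdet
  have hfcontA : ContinuousOn f A := by
    apply ContinuousOn.add
    apply ContinuousOn.add
    · apply ContinuousOn.mul continuousOn_const
      apply Real.continuousOn_log.comp hcontdet.continuousOn
      intro w hw
      exact (ne_of_gt (lt_of_lt_of_le hδ0 hw.2))
    · exact hcontsum.continuousOn
    · exact hcontq.continuousOn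
  have hTA : T ⊆ A := fun w hw => ⟨hw.1, hw.2.1⟩
  have hTclosed : IsClosed T := by
    have h1 := hfcontA.preimage_isClosed_of_isClosed hAclosed (isClosed_Iic (a := c))
    have h2 : T = A ∩ f ⁻¹' Set.Iic c := by
      ext w
      constructor
      · intro hw; exact ⟨⟨hw.1, hw.2.1⟩, hw.2.2⟩
      · intro hw; exact ⟨hw.1.1, hw.1.2, hw.2⟩
    rw [h2]; exact h1
  have hTbdd : Bornology.IsBounded T := by
    apply (Metric.isBounded_closedBall (x := (0 : EuclideanSpace ℝ (Fin M))) (r := R)).subset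
    intro w hw
    rw [Metric.mem_closedBall, dist_zero_right]
    calc ‖w‖ ≤ ∑ i, w i := aux_norm_le_sum w hw.1
      _ ≤ R := hsum_bound w (hTS hw) hw.2.2
  have hTcompact : IsCompact T := Metric.isCompact_of_isClosed_isBounded hTclosed hTbdd
  obtain ⟨z, hzT, hz⟩ := hTcompact.exists_isMinOn ⟨w₁, hw₁T⟩ (hfcontA.mono hTA)
  refine ⟨z, hTS hzT, ?_⟩
  rw [isMinOn_iff]
  intro w hw
  by_cases hfw : f w ≤ c
  · exact isMinOn_iff.mp hz w (hST w hw hfw)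
  · have h1 : f z ≤ c := le_trans (isMinOn_iff.mp hz w₁ hw₁T) le_rfl
    linarith [le_of_not_ge hfw]
end C


theorem stmt_10 (M N : ℕ) (hN : 0 < N) (hMN : N ≤ M)
    (V : Matrix (Fin M) (Fin N) ℝ) (hV : V.rank = N)
    (G : (Fin M → ℝ) → Matrix (Fin N) (Fin N) ℝ)
    (hG : ∀ w, G w = Vᵀ * diagonal w * V)
    (E : EuclideanSpace ℝ (Fin M) → ℝ)
    (hE : ∀ w, E w = -(1 / (N : ℝ)) * Real.log (G (fun i => w i)).det + ∑ i, w i)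
    (K : Submodule ℝ (EuclideanSpace ℝ (Fin M)))
    (hK : ∀ u : EuclideanSpace ℝ (Fin M), u ∈ K ↔ Vᵀ * diagonal (fun i => u i) * V = 0)
    (η : ℝ) (hη : 0 < η)
    (Eη : EuclideanSpace ℝ (Fin M) → ℝ)
    (hEη : ∀ w, Eη w = E w + η * ‖(K.orthogonalProjectionOnto w : EuclideanSpace ℝ (Fin M))‖ ^ 2) :
    ∃! w : EuclideanSpace ℝ (Fin M),
      w ∈ {w : EuclideanSpace ℝ (Fin M) | (∀ i, 0 ≤ w i) ∧ 0 < (G (fun i => w i)).det} ∧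
      IsMinOn Eη {w : EuclideanSpace ℝ (Fin M) | (∀ i, 0 ≤ w i) ∧ 0 < (G (fun i => w i)).det} w := by
  have hDm : ∀ v : Fin M → ℝ, G v = Dm V v := fun v => by rw [hG]; rfl
  have hfun : Eη = fun w : EuclideanSpace ℝ (Fin M) =>
      -(1 / (N : ℝ)) * Real.log (Dm V (fun i => w i)).det + ∑ i, w i
        + η * ‖(K.orthogonalProjectionOnto w : EuclideanSpace ℝ (Fin M))‖ ^ 2 := by
    funext w
    rw [hEη, hE, hDm]
  have hset : {w : EuclideanSpace ℝ (Fin M) | (∀ i, 0 ≤ w i) ∧ 0 < (G (fun i => w i)).det}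
      = {w : EuclideanSpace ℝ (Fin M) | (∀ i, 0 ≤ w i) ∧ 0 < (Dm V (fun i => w i)).det} := by
    ext w; rw [Set.mem_setOf_eq, Set.mem_setOf_eq, hDm]
  have hK' : ∀ u : EuclideanSpace ℝ (Fin M), u ∈ K ↔ Dm V (fun i => u i) = 0 := fun u => by
    rw [show Dm V (fun i => u i) = Vᵀ * diagonal (fun i => u i) * V from rfl]
    exact hK u
  rw [hset, hfun]
  obtain ⟨z, hzS, hzmin⟩ := aux_exists V hN hV K hη
  have hsc := aux_strictconv V hN K hK' hη
  exact ⟨z, ⟨hzS, hzmin⟩, fun y hy => hsc.eq_of_isMinOn hy.2 hzmin hy.1 hzS⟩
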